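/- Let G be a graph with n vertices, m edges, and c connected components. Then the number of orientations of G up to push equivalence is exactly 2^{m−n+c}. -/

import Mathlib

open SimpleGraph

/-- Booleans as elements of `ZMod 2`. -/
def bz (b : Bool) : ZMod 2 := if b then 1 else 0

lemma bz_decide : ∀ p : ZMod 2, bz (decide (p = 1)) = p := by decide

section aux

variable {V : Type*} [Fintype V] [DecidableEq V]

/-- A reference orientation coming from a linear order on the vertices. -/
noncomputable def bse (u v : V) : Bool :=
  decide (Fintype.equivFin V u < Fintype.equivFin V v)

lemma bse_ne {u v : V} (h : u ≠ v) : bse u v = !bse v u := by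
  have h' : Fintype.equivFin V u ≠ Fintype.equivFin V v := fun hh => h (by
    simpa using congrArg (Fintype.equivFin V).symm hh)
  rcases h'.lt_or_gt with h'' | h'' <;>
    simp [bse, h'', h''.not_gt, (lt_asymm h'')]

variable (G : SimpleGraph V) [DecidableRel G.Adj]

/-- The "cut" homomorphism sending a vertex 2-coloring to its coboundary on edges. -/
def cutHom : (V → ZMod 2) →+ (G.edgeSet → ZMod 2) where
  toFun s := fun e => Sym2.lift ⟨fun u v => s u + s v, fun u v => add_comm _ _⟩ e.1
  map_zero' := by
    funext e
    obtain ⟨e, he⟩ := e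
    induction e using Sym2.ind with
    | _ u v => simp
  map_add' s t := by
    funext e
    obtain ⟨e, he⟩ := e
    induction e using Sym2.ind with
    | _ u v => simp; ring

lemma cutHom_apply (s : V → ZMod 2) {u v : V} (h : s(u, v) ∈ G.edgeSet) :
    cutHom G s ⟨s(u, v), h⟩ = s u + s v := by
  simp [cutHom]

/-- Difference of an orientation with the reference orientation, as a function on edges. -/
noncomputable def oriToEdge
    (o : {o : V → V → Bool // ∀ u v, G.Adj u v → o u v = !o v u}) :
    G.edgeSet → ZMod 2 :=
  fun e => Sym2.lift ⟨fun u v => if G.Adj u v then bz (xor (o.1 u v) (bse u v)) else 0,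
    by
      intro u v
      dsimp only
      by_cases h : G.Adj u v
      · rw [if_pos h, if_pos h.symm, o.2 u v h, bse_ne h.ne]
        cases o.1 v u <;> cases bse v u <;> rfl
      · rw [if_neg h, if_neg fun h' => h h'.symm]⟩ e.1

lemma oriToEdge_apply (o : {o : V → V → Bool // ∀ u v, G.Adj u v → o u v = !o v u})
    {u v : V} (h : s(u, v) ∈ G.edgeSet) :
    oriToEdge G o ⟨s(u, v), h⟩ = bz (xor (o.1 u v) (bse u v)) := by
  simp [oriToEdge, (SimpleGraph.mem_edgeSet G).1 h]

lemma key1 : ∀ a b p q : Bool,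
    bz p + bz q = bz (xor (xor a (xor p q)) b) - bz (xor a b) := by decide

lemma key2 : ∀ (a c b : Bool) (p q : ZMod 2),
    p + q = bz (xor c b) - bz (xor a b) →
      xor a (xor (decide (p = 1)) (decide (q = 1))) = c := by decide

lemma rel_iff (o₁ o₂ : {o : V → V → Bool // ∀ u v, G.Adj u v → o u v = !o v u}) :
    (∃ s : V → Bool, ∀ u v, G.Adj u v →
        Bool.xor (o₁.1 u v) (Bool.xor (s u) (s v)) = o₂.1 u v) ↔
      oriToEdge G o₂ - oriToEdge G o₁ ∈ (cutHom G).range := by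
  constructor
  · rintro ⟨s, hs⟩
    refine ⟨fun v => bz (s v), ?_⟩
    funext e
    obtain ⟨e, he⟩ := e
    induction e using Sym2.ind with
    | _ u v =>
      have hadj : G.Adj u v := (SimpleGraph.mem_edgeSet G).1 he
      have := hs u v hadj
      rw [cutHom_apply, Pi.sub_apply, oriToEdge_apply, oriToEdge_apply, ← this]
      exact key1 _ _ _ _
  · rintro ⟨t, ht⟩
    refine ⟨fun v => decide (t v = 1), fun u v hadj => ?_⟩
    have he : s(u, v) ∈ G.edgeSet := (SimpleGraph.mem_edgeSet G).2 hadj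
    have := congrFun ht ⟨s(u, v), he⟩
    rw [cutHom_apply, Pi.sub_apply, oriToEdge_apply, oriToEdge_apply] at this
    exact key2 _ _ _ _ _ this

lemma oriToEdge_surjective :
    Function.Surjective (oriToEdge (V := V) G) := by
  intro f
  refine ⟨⟨fun u v => if h : G.Adj u v then
      xor (bse u v) (decide (f ⟨s(u, v), (SimpleGraph.mem_edgeSet G).2 h⟩ = 1)) else false,
    fun u v h => ?_⟩, ?_⟩
  · dsimp only
    rw [dif_pos h, dif_pos h.symm]
    have hsym : (⟨s(v, u), (SimpleGraph.mem_edgeSet G).2 h.symm⟩ : G.edgeSet)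
        = ⟨s(u, v), (SimpleGraph.mem_edgeSet G).2 h⟩ := by
      apply Subtype.ext; exact Sym2.eq_swap
    rw [hsym, bse_ne h.ne]
    cases bse v u <;> cases decide (f ⟨s(u, v), (SimpleGraph.mem_edgeSet G).2 h⟩ = 1) <;> rfl
  · funext e
    obtain ⟨e, he⟩ := e
    induction e using Sym2.ind with
    | _ u v =>
      have hadj : G.Adj u v := (SimpleGraph.mem_edgeSet G).1 he
      rw [oriToEdge_apply]
      simp only [dif_pos hadj]
      rw [show (xor (xor (bse u v) (decide (f ⟨s(u,v), (SimpleGraph.mem_edgeSet G).2 hadj⟩ = 1))) (bse u v))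
          = decide (f ⟨s(u,v), (SimpleGraph.mem_edgeSet G).2 hadj⟩ = 1) from by
        cases bse u v <;> cases decide (f ⟨s(u,v), (SimpleGraph.mem_edgeSet G).2 hadj⟩ = 1) <;> rfl]
      exact bz_decide _

lemma ker_equiv :
    Nonempty ((G.ConnectedComponent → ZMod 2) ≃ (cutHom G).ker) := by
  refine ⟨{
    toFun := fun g => ⟨fun v => g (G.connectedComponentMk v), ?_⟩
    invFun := fun s => SimpleGraph.ConnectedComponent.lift (fun v => s.1 v) ?_
    left_inv := ?_
    right_inv := ?_ }⟩
  · rw [AddMonoidHom.mem_ker]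
    funext e
    obtain ⟨e, he⟩ := e
    induction e using Sym2.ind with
    | _ u v =>
      have hadj : G.Adj u v := (SimpleGraph.mem_edgeSet G).1 he
      rw [cutHom_apply]
      rw [SimpleGraph.ConnectedComponent.eq.2 hadj.reachable]
      exact CharTwo.add_self_eq_zero _
  · intro v w p _
    clear * - p
    induction p with
    | nil => rfl
    | @cons a b c h p ih =>
      refine Eq.trans ?_ ih
      have hs := s.2
      rw [AddMonoidHom.mem_ker] at hs
      have := congrFun hs ⟨s(a, b), (SimpleGraph.mem_edgeSet G).2 h⟩
      rw [cutHom_apply, Pi.zero_apply] at this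
      have h2 : s.1 a = - s.1 b := by linear_combination this
      show s.1 a = s.1 b
      rw [h2]; exact CharTwo.neg_eq _
  · intro g
    funext c
    induction c using SimpleGraph.ConnectedComponent.ind with
    | _ v => rfl
  · intro s
    apply Subtype.ext
    funext v
    rfl

end aux

/-- The number of orientations of a graph `G` (with `n` vertices, `m` edges and `c`
connected components), counted up to push equivalence, is `2 ^ (m - n + c)`.
Orientations are encoded as `o : V → V → Bool` with `o u v = !o v u` on adjacent pairs
(`o u v = true` meaning the arc is directed `u → v`); two orientations are identified
when one is obtained from the other by pushing some vertex set. -/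
theorem stmt10 {V : Type*} [Fintype V] [DecidableEq V]
    (G : SimpleGraph V) [DecidableRel G.Adj] :
    Nat.card (Quot (fun (o₁ o₂ : {o : V → V → Bool // ∀ u v, G.Adj u v → o u v = !o v u}) =>
        ∃ s : V → Bool, ∀ u v, G.Adj u v →
          Bool.xor (o₁.1 u v) (Bool.xor (s u) (s v)) = o₂.1 u v))
      = 2 ^ (G.edgeFinset.card + Nat.card G.ConnectedComponent - Fintype.card V) := by
  classical
  set n := Fintype.card V with hn
  set m := G.edgeFinset.card with hm
  set c := Nat.card G.ConnectedComponent with hc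
  set H := (cutHom G).range with hH
  -- the quotient map
  set r := fun (o₁ o₂ : {o : V → V → Bool // ∀ u v, G.Adj u v → o u v = !o v u}) =>
      ∃ s : V → Bool, ∀ u v, G.Adj u v →
        Bool.xor (o₁.1 u v) (Bool.xor (s u) (s v)) = o₂.1 u v with hr
  have hΦ : ∀ a b, r a b →
      (QuotientAddGroup.mk (s := H) (oriToEdge G a)) = QuotientAddGroup.mk (oriToEdge G b) := by
    intro a b hab
    rw [QuotientAddGroup.eq, neg_add_eq_sub]
    exact (rel_iff G a b).1 hab
  let Φ : Quot r → (G.edgeSet → ZMod 2) ⧸ H := Quot.lift _ hΦ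
  have hbij : Function.Bijective Φ := by
    constructor
    · intro x y
      induction x using Quot.ind with
      | _ a =>
        induction y using Quot.ind with
        | _ b =>
          intro h
          apply Quot.sound
          apply (rel_iff G a b).2
          have : (QuotientAddGroup.mk (s := H) (oriToEdge G a))
              = QuotientAddGroup.mk (oriToEdge G b) := h
          rw [QuotientAddGroup.eq, neg_add_eq_sub] at this
          exact this
    · intro q
      induction q using QuotientAddGroup.induction_on with
      | _ f =>
        obtain ⟨o, ho⟩ := oriToEdge_surjective G f
        exact ⟨Quot.mk r o, by simp [Φ, ho]⟩
  have hcard : Nat.card (Quot r) = Nat.card ((G.edgeSet → ZMod 2) ⧸ H) :=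
    Nat.card_eq_of_bijective Φ hbij
  -- cardinalities
  have hE : Nat.card (G.edgeSet → ZMod 2) = 2 ^ m := by
    rw [Nat.card_fun, Nat.card_zmod, hm, SimpleGraph.edgeFinset, Set.toFinset_card,
      Nat.card_eq_fintype_card]
  have hVc : Nat.card (V → ZMod 2) = 2 ^ n := by
    rw [Nat.card_fun, Nat.card_zmod, Nat.card_eq_fintype_card]
  have hccfin : Finite G.ConnectedComponent := Quot.finite _
  have hker : Nat.card (cutHom G).ker = 2 ^ c := by
    obtain ⟨e⟩ := ker_equiv G
    rw [← Nat.card_eq_of_bijective e e.bijective, Nat.card_fun, Nat.card_zmod]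
  have hc_le : c ≤ n := by
    rw [hc, hn, ← Nat.card_eq_fintype_card]
    exact Nat.card_le_card_of_surjective G.connectedComponentMk
      (Quot.exists_rep)
  -- card of range via first isomorphism theorem
  have hrange : Nat.card H * 2 ^ c = 2 ^ n := by
    have e := QuotientAddGroup.quotientKerEquivRange (cutHom G)
    have h1 : Nat.card ((V → ZMod 2) ⧸ (cutHom G).ker) = Nat.card H :=
      Nat.card_eq_of_bijective e e.bijective
    have h2 := AddSubgroup.card_eq_card_quotient_mul_card_addSubgroup (cutHom G).ker
    rw [hVc, h1, hker] at h2
    exact h2.symm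
  have hrange' : Nat.card H = 2 ^ (n - c) := by
    have : 2 ^ (n - c) * 2 ^ c = 2 ^ n := by
      rw [← pow_add]; congr 1; omega
    have h2 := hrange.trans this.symm
    exact Nat.eq_of_mul_eq_mul_right (Nat.pow_pos (by norm_num)) h2
  have hlag := AddSubgroup.card_eq_card_quotient_mul_card_addSubgroup H
  rw [hE, hrange', ← hcard] at hlag
  have hle2 : n - c ≤ m := by
    rw [← Nat.pow_dvd_pow_iff_le_right (x := 2) one_lt_two]
    exact ⟨Nat.card (Quot r), by rw [hlag]; ring⟩
  have : Nat.card (Quot r) * 2 ^ (n - c) = 2 ^ (m - (n - c)) * 2 ^ (n - c) := by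
    rw [← pow_add, Nat.sub_add_cancel hle2, ← hlag]
  have hfin := Nat.eq_of_mul_eq_mul_right (Nat.pow_pos (by norm_num)) this
  rw [hfin]
  congr 1
  omega
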